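/- Let h : τ → Option τ and let t0 be a task. If there exists a natural number n with walk t0 n = none, then t0 belongs to no deadlocked finite set of tasks. (Soundness of the detector's break conditions: reaching a fulfilled promise or an unblocked task during the traversal proves that committing to the blocking wait cannot create a deadlock involving t0.) -/

import Mathlib

/-- A finite set of tasks is deadlocked if it is nonempty and every task in it
waits (via the waits-for map `h`) on some task also in the set. -/
def Deadlocked {τ : Type*} (h : τ → Option τ) (T : Finset τ) : Prop :=
  T.Nonempty ∧ ∀ t ∈ T, ∃ t' ∈ T, h t = some t'

/-- The detector's traversal: `walk h t0 n` follows the waits-for map `h`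
for `n` steps starting from `t0`. -/
def walk {τ : Type*} (h : τ → Option τ) (t0 : τ) : ℕ → Option τ
  | 0 => some t0
  | n + 1 => (walk h t0 n).bind h

/-- If the traversal from `t0` ever reaches `none` (a fulfilled promise or an
unblocked task), then `t0` belongs to no deadlocked finite set of tasks. -/
theorem stmt_12 {τ : Type*} (h : τ → Option τ) (t0 : τ)
    (hnone : ∃ n : ℕ, walk h t0 n = none) :
    ∀ T : Finset τ, Deadlocked h T → t0 ∉ T := by
  intro T hT ht0
  obtain ⟨n, hn⟩ := hnone
  have key : ∀ n, ∃ t ∈ T, walk h t0 n = some t := by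
    intro n
    induction n with
    | zero => exact ⟨t0, ht0, rfl⟩
    | succ k ih =>
      obtain ⟨t, htT, hwk⟩ := ih
      obtain ⟨t', ht'T, ht'⟩ := hT.2 t htT
      exact ⟨t', ht'T, by simp [walk, hwk, ht']⟩
  obtain ⟨t, _, hwk⟩ := key n
  rw [hn] at hwk
  exact nomatch hwk
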